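/- arXiv:2408.16456 — 2 statements merged into one kernel-verified Lean document; each statement's English description precedes it below -/
import Mathlib

section
/- If q is an idempotent element of a continuous t-norm * on [a,b] (i.e., q*q = q), then for every p in [a,b], p * q = min(p, q). -/
/-- If q is an idempotent element of a continuous t-norm on [a,b],
then p * q = min p q for every p in [a,b]. -/
theorem idempotent_min (a b : ℝ) (f : ℝ → ℝ → ℝ)
    (hmap : ∀ p ∈ Set.Icc a b, ∀ q ∈ Set.Icc a b, f p q ∈ Set.Icc a b)
    (hcont : ContinuousOn (fun p : ℝ × ℝ => f p.1 p.2) (Set.Icc a b ×ˢ Set.Icc a b))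
    (hcomm : ∀ p ∈ Set.Icc a b, ∀ q ∈ Set.Icc a b, f p q = f q p)
    (hassoc : ∀ p ∈ Set.Icc a b, ∀ q ∈ Set.Icc a b, ∀ r ∈ Set.Icc a b,
      f (f p q) r = f p (f q r))
    (hid : ∀ p ∈ Set.Icc a b, f p b = p)
    (hmono : ∀ p p' q q', p ∈ Set.Icc a b → p' ∈ Set.Icc a b → q ∈ Set.Icc a b →
      q' ∈ Set.Icc a b → p ≤ p' → q ≤ q' → f p q ≤ f p' q')
    (q : ℝ) (hq : q ∈ Set.Icc a b) (hidem : f q q = q) :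
    ∀ p ∈ Set.Icc a b, f p q = min p q := by
  intro p hp
  have hab : a ≤ b := hp.1.trans hp.2
  have hmem_a : a ∈ Set.Icc a b := ⟨le_refl a, hab⟩
  have hmem_b : b ∈ Set.Icc a b := ⟨hab, le_refl b⟩
  rcases le_total p q with hpq | hqp
  · -- p ≤ q, show f p q = p
    rw [min_eq_left hpq]
    -- continuity of x ↦ f x q on Icc a b
    have hg : ContinuousOn (fun x => f x q) (Set.Icc a b) := by
      have : ContinuousOn (fun x : ℝ => ((x, q) : ℝ × ℝ)) (Set.Icc a b) :=
        (continuous_id.prodMk continuous_const).continuousOn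
      exact hcont.comp this (fun x hx => ⟨hx, hq⟩)
    have hgq : ContinuousOn (fun x => f x q) (Set.Icc a q) :=
      hg.mono (Set.Icc_subset_Icc le_rfl hq.2)
    have haq : a ≤ q := hq.1
    have hga : f a q ≤ a := by
      have := hmono a a q b hmem_a hmem_a hq hmem_b le_rfl hq.2
      rwa [hid a hmem_a] at this
    have hp_mem : p ∈ Set.Icc (f a q) ((fun x => f x q) q) := by
      simp only [hidem]
      exact ⟨hga.trans hp.1, hpq⟩
    obtain ⟨r, hr, hrq⟩ := intermediate_value_Icc haq hgq hp_mem
    have hr' : r ∈ Set.Icc a b := ⟨hr.1, hr.2.trans hq.2⟩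
    simp only at hrq
    calc f p q = f (f r q) q := by rw [hrq]
    _ = f r (f q q) := hassoc r hr' q hq q hq
    _ = f r q := by rw [hidem]
    _ = p := hrq
  · -- q ≤ p, show f p q = q
    rw [min_eq_right hqp]
    have h1 : q ≤ f p q := by
      have := hmono q p q q hq hp hq hq hqp le_rfl
      rwa [hidem] at this
    have h2 : f p q ≤ q := by
      have := hmono p b q q hp hmem_b hq hq hp.2 le_rfl
      rwa [hcomm b hmem_b q hq, hid q hq] at this
    exact le_antisymm h2 h1
end

section
/- Let *₁ and *₂ be continuous t-norms on [0,1], and let U₁, U₂ ⊆ [0,1] be open dense subsets. Suppose ψ : U₁ → U₂ is a strictly increasing bijection with ψ(x *₁ y) = ψ(x) *₂ ψ(y) for all x, y ∈ U₁. Then the map φ : [0,1] → [0,1] defined by φ(x) = sup{ψ(y) : y ∈ [0,x] ∩ U₁} (and φ(0)=0) is an order isomorphism of [0,1] extending ψ, and satisfies φ(x *₁ y) = φ(x) *₂ φ(y) for all x, y ∈ [0,1]; hence *₁ and *₂ are isomorphic continuous t-norms. -/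
/-- A continuous t-norm on [0,1], as a real binary function. -/
def IsContinuousTnorm (f : ℝ → ℝ → ℝ) : Prop :=
  (∀ x ∈ Set.Icc (0:ℝ) 1, ∀ y ∈ Set.Icc (0:ℝ) 1, f x y ∈ Set.Icc (0:ℝ) 1) ∧
  ContinuousOn (fun p : ℝ × ℝ => f p.1 p.2) (Set.Icc 0 1 ×ˢ Set.Icc 0 1) ∧
  (∀ x ∈ Set.Icc (0:ℝ) 1, ∀ y ∈ Set.Icc (0:ℝ) 1, f x y = f y x) ∧
  (∀ x ∈ Set.Icc (0:ℝ) 1, ∀ y ∈ Set.Icc (0:ℝ) 1, ∀ z ∈ Set.Icc (0:ℝ) 1,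
    f (f x y) z = f x (f y z)) ∧
  (∀ x ∈ Set.Icc (0:ℝ) 1, f x 1 = x) ∧
  (∀ x x' y y', x ∈ Set.Icc (0:ℝ) 1 → x' ∈ Set.Icc (0:ℝ) 1 → y ∈ Set.Icc (0:ℝ) 1 →
    y' ∈ Set.Icc (0:ℝ) 1 → x ≤ x' → y ≤ y' → f x y ≤ f x' y')

/-- An order- and operation-preserving bijection between open dense subsets of
[0,1] extends, via suprema, to an isomorphism of the continuous t-norms. -/
theorem extend_iso_from_dense
    (f g : ℝ → ℝ → ℝ) (hf : IsContinuousTnorm f) (hg : IsContinuousTnorm g)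
    (U₁ U₂ : Set ℝ)
    (hU₁ : U₁ ⊆ Set.Icc 0 1) (hU₂ : U₂ ⊆ Set.Icc 0 1)
    (hU₁open : IsOpen U₁) (hU₂open : IsOpen U₂)
    (hU₁dense : Set.Icc (0:ℝ) 1 ⊆ closure U₁)
    (hU₂dense : Set.Icc (0:ℝ) 1 ⊆ closure U₂)
    (ψ : ℝ → ℝ)
    (hbij : Set.BijOn ψ U₁ U₂)
    (hmono : StrictMonoOn ψ U₁)
    (hhom : ∀ x ∈ U₁, ∀ y ∈ U₁, ψ (f x y) = g (ψ x) (ψ y)) :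
    let φ : ℝ → ℝ := fun x => sSup (ψ '' (Set.Icc 0 x ∩ U₁))
    StrictMonoOn φ (Set.Icc 0 1) ∧
    Set.BijOn φ (Set.Icc 0 1) (Set.Icc 0 1) ∧
    (∀ x ∈ U₁, φ x = ψ x) ∧
    (∀ x ∈ Set.Icc (0:ℝ) 1, ∀ y ∈ Set.Icc (0:ℝ) 1, φ (f x y) = g (φ x) (φ y)) := by
  obtain ⟨hfrange, hfc, hfcomm, hfassoc, hfid, hfmono⟩ := hf
  obtain ⟨hgrange, hgc, hgcomm, hgassoc, hgid, hgmono⟩ := hg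
  intro φ
  have hφdef : ∀ x : ℝ, φ x = sSup (ψ '' (Set.Icc 0 x ∩ U₁)) := fun _ => rfl
  have hzero : (0:ℝ) ∈ Set.Icc (0:ℝ) 1 := ⟨le_rfl, zero_le_one⟩
  have hone : (1:ℝ) ∈ Set.Icc (0:ℝ) 1 := ⟨zero_le_one, le_rfl⟩
  -- open subsets of [0,1] lie in (0,1)
  have hIoo : ∀ (U : Set ℝ), IsOpen U → U ⊆ Set.Icc 0 1 → ∀ u ∈ U, u ∈ Set.Ioo (0:ℝ) 1 := by
    intro U hUo hUs u hu
    rcases Metric.isOpen_iff.mp hUo u hu with ⟨ε, hε, hball⟩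
    have h1 : u - ε/2 ∈ U := by
      apply hball
      rw [Metric.mem_ball, Real.dist_eq, show u - ε/2 - u = -(ε/2) by ring, abs_neg,
        abs_of_pos (by linarith)]
      linarith
    have h2 : u + ε/2 ∈ U := by
      apply hball
      rw [Metric.mem_ball, Real.dist_eq, show u + ε/2 - u = ε/2 by ring,
        abs_of_pos (by linarith)]
      linarith
    have h3 := (hUs h1).1
    have h4 := (hUs h2).2
    constructor <;> linarith
  have hU₁I : ∀ u ∈ U₁, u ∈ Set.Ioo (0:ℝ) 1 := hIoo U₁ hU₁open hU₁
  have hU₂I : ∀ u ∈ U₂, u ∈ Set.Ioo (0:ℝ) 1 := hIoo U₂ hU₂open hU₂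
  -- density tool
  have hd : ∀ (U : Set ℝ), IsOpen U → Set.Icc (0:ℝ) 1 ⊆ closure U →
      ∀ a b : ℝ, a < b → 0 < b → a < 1 → ∃ u ∈ U, a < u ∧ u < b := by
    intro U hUo hUd a b hab ha1 hb1
    have hmm : max a 0 < min b 1 := max_lt (lt_min hab hb1) (lt_min ha1 one_pos)
    have hl0 : (0:ℝ) ≤ max a 0 := le_max_right a 0
    have hr1 : min b 1 ≤ 1 := min_le_right b 1
    set m := (max a 0 + min b 1)/2 with hm
    have hmI : m ∈ Set.Icc (0:ℝ) 1 := ⟨by rw [hm]; linarith, by rw [hm]; linarith⟩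
    rcases mem_closure_iff.mp (hUd hmI) (Set.Ioo (max a 0) (min b 1)) isOpen_Ioo
        ⟨by rw [hm]; linarith, by rw [hm]; linarith⟩ with ⟨u, huIoo, huU⟩
    exact ⟨u, huU, lt_of_le_of_lt (le_max_left a 0) huIoo.1,
      lt_of_lt_of_le huIoo.2 (min_le_left b 1)⟩
  have hψ2 : ∀ u ∈ U₁, ψ u ∈ U₂ := fun u hu => hbij.mapsTo hu
  have hψI : ∀ u ∈ U₁, ψ u ∈ Set.Icc (0:ℝ) 1 := fun u hu => hU₂ (hψ2 u hu)
  have hmonoM : MonotoneOn ψ U₁ := hmono.monotoneOn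
  have hf1 : ∀ y ∈ Set.Icc (0:ℝ) 1, f 1 y = y := fun y hy => by
    rw [hfcomm 1 hone y hy, hfid y hy]
  have hg1 : ∀ b ∈ Set.Icc (0:ℝ) 1, g 1 b = b := fun b hb => by
    rw [hgcomm 1 hone b hb, hgid b hb]
  have hg0 : ∀ b ∈ Set.Icc (0:ℝ) 1, g 0 b = 0 := by
    intro b hb
    refine le_antisymm ?_ (hgrange 0 hzero b hb).1
    have := hgmono 0 0 b 1 hzero hzero hb hone le_rfl hb.2
    rwa [hgid 0 hzero] at this
  have hf0 : ∀ y ∈ Set.Icc (0:ℝ) 1, f 0 y = 0 := by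
    intro y hy
    refine le_antisymm ?_ (hfrange 0 hzero y hy).1
    have := hfmono 0 0 y 1 hzero hzero hy hone le_rfl hy.2
    rwa [hfid 0 hzero] at this
  have hbdd : ∀ x : ℝ, BddAbove (ψ '' (Set.Icc 0 x ∩ U₁)) := by
    intro x
    refine ⟨1, ?_⟩
    rintro v ⟨t, ⟨_, htU⟩, rfl⟩
    exact (hψI t htU).2
  have hφ01 : ∀ x : ℝ, φ x ∈ Set.Icc (0:ℝ) 1 := by
    intro x
    rw [hφdef, Set.mem_Icc]
    constructor
    · apply Real.sSup_nonneg
      rintro v ⟨t, ⟨_, htU⟩, rfl⟩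
      exact (hψI t htU).1
    · apply Real.sSup_le
      · rintro v ⟨t, ⟨_, htU⟩, rfl⟩
        exact (hψI t htU).2
      · exact zero_le_one
  have hφψ : ∀ x ∈ U₁, φ x = ψ x := by
    intro x hx
    rw [hφdef]
    apply le_antisymm
    · apply Real.sSup_le
      · rintro v ⟨t, ⟨⟨_, htx⟩, htU⟩, rfl⟩
        exact hmonoM htU hx htx
      · exact (hψI x hx).1
    · exact le_csSup (hbdd x) ⟨x, ⟨⟨(hU₁I x hx).1.le, le_rfl⟩, hx⟩, rfl⟩
  have hφ0 : φ 0 = 0 := by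
    rw [hφdef]
    have he : Set.Icc (0:ℝ) 0 ∩ U₁ = ∅ := by
      ext t
      simp only [Set.mem_inter_iff, Set.mem_Icc, Set.mem_empty_iff_false, iff_false, not_and]
      rintro ⟨h1, h2⟩ htU
      have := (hU₁I t htU).1
      linarith
    rw [he, Set.image_empty, Real.sSup_empty]
  have hφmono : StrictMonoOn φ (Set.Icc (0:ℝ) 1) := by
    intro a ha b hb hab
    obtain ⟨u', hu'U, hau', hu'b⟩ := hd U₁ hU₁open hU₁dense a b hab
      (lt_of_le_of_lt ha.1 hab) (lt_of_lt_of_le hab hb.2)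
    obtain ⟨u, huU, hau, huu'⟩ := hd U₁ hU₁open hU₁dense a u' hau'
      (hU₁I u' hu'U).1 (lt_of_lt_of_le hau' (hU₁I u' hu'U).2.le)
    have h1 : φ a ≤ ψ u := by
      rw [hφdef]
      apply Real.sSup_le
      · rintro v ⟨t, ⟨⟨_, hta⟩, htU⟩, rfl⟩
        exact hmonoM htU huU (le_of_lt (lt_of_le_of_lt hta hau))
      · exact (hψI u huU).1
    have h2 : ψ u < ψ u' := hmono huU hu'U huu'
    have h3 : ψ u' ≤ φ b := by
      rw [hφdef]
      exact le_csSup (hbdd b) ⟨u', ⟨⟨(hU₁I u' hu'U).1.le, hu'b.le⟩, hu'U⟩, rfl⟩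
    linarith
  have hφM : MonotoneOn φ (Set.Icc (0:ℝ) 1) := hφmono.monotoneOn
  have hφsurj : ∀ z ∈ Set.Icc (0:ℝ) 1, ∃ x ∈ Set.Icc (0:ℝ) 1, φ x = z := by
    intro z hz
    set T := {t : ℝ | t ∈ Set.Icc (0:ℝ) 1 ∧ φ t ≤ z} with hT
    have hT0 : (0:ℝ) ∈ T := ⟨hzero, by rw [hφ0]; exact hz.1⟩
    have hTbdd : BddAbove T := ⟨1, fun t ht => ht.1.2⟩
    set x := sSup T with hx
    have hx0 : 0 ≤ x := le_csSup hTbdd hT0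
    have hx1 : x ≤ 1 := csSup_le ⟨0, hT0⟩ (fun t ht => ht.1.2)
    have hxI : x ∈ Set.Icc (0:ℝ) 1 := ⟨hx0, hx1⟩
    rcases lt_trichotomy (φ x) z with hlt | heq | hgt
    · exfalso
      obtain ⟨u, huU, h1, h2⟩ := hd U₂ hU₂open hU₂dense (φ x) z hlt
        (lt_of_le_of_lt (hφ01 x).1 hlt) (lt_of_lt_of_le hlt hz.2)
      obtain ⟨u₁, hu₁U, hu₁⟩ := hbij.surjOn huU
      have hu₁I : u₁ ∈ Set.Icc (0:ℝ) 1 := hU₁ hu₁U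
      have hTm : u₁ ∈ T := ⟨hu₁I, by rw [hφψ u₁ hu₁U, hu₁]; exact h2.le⟩
      have hle : u₁ ≤ x := le_csSup hTbdd hTm
      have hle2 : φ u₁ ≤ φ x := hφM hu₁I hxI hle
      rw [hφψ u₁ hu₁U, hu₁] at hle2
      linarith
    · exact ⟨x, hxI, heq⟩
    · exfalso
      obtain ⟨u, huU, h1, h2⟩ := hd U₂ hU₂open hU₂dense z (φ x) hgt
        (lt_of_le_of_lt hz.1 hgt) (lt_of_lt_of_le hgt (hφ01 x).2)
      obtain ⟨u₁, hu₁U, hu₁⟩ := hbij.surjOn huU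
      have hu₁I : u₁ ∈ Set.Icc (0:ℝ) 1 := hU₁ hu₁U
      have hu₁x : u₁ < x := by
        by_contra hcon
        push_neg at hcon
        have := hφM hxI hu₁I hcon
        rw [hφψ u₁ hu₁U, hu₁] at this
        linarith
      rw [hx] at hu₁x
      obtain ⟨t, htT, htgt⟩ := exists_lt_of_lt_csSup ⟨0, hT0⟩ hu₁x
      have h3 : φ u₁ < φ t := hφmono hu₁I htT.1 htgt
      rw [hφψ u₁ hu₁U, hu₁] at h3
      have := htT.2
      linarith
  have hφ1 : φ 1 = 1 := by
    obtain ⟨x, hxI, hx⟩ := hφsurj 1 hone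
    exact le_antisymm (hφ01 1).2 (le_trans (le_of_eq hx.symm) (hφM hxI hone hxI.2))
  have hB1 : ∀ c : ℝ, 0 < c → c ≤ 1 → ∀ w : ℝ, w < φ c → ∃ t ∈ U₁, t < c ∧ w < ψ t := by
    intro c hc0 hc1 w hw
    have hcI : c ∈ Set.Icc (0:ℝ) 1 := ⟨hc0.le, hc1⟩
    have hφc0 : 0 < φ c := by
      have := hφmono hzero hcI hc0
      rwa [hφ0] at this
    have hmz : max w 0 < φ c := max_lt hw hφc0
    set z := (max w 0 + φ c)/2 with hz
    have hz1 : max w 0 < z := by rw [hz]; linarith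
    have hz2 : z < φ c := by rw [hz]; linarith
    have hzI : z ∈ Set.Icc (0:ℝ) 1 :=
      ⟨le_trans (le_max_right w 0) hz1.le, le_trans hz2.le (hφ01 c).2⟩
    obtain ⟨r, hrI, hr⟩ := hφsurj z hzI
    have hrc : r < c := by
      by_contra hcon
      push_neg at hcon
      have := hφM hcI hrI hcon
      rw [hr] at this
      linarith
    obtain ⟨t, htU, hrt, htc⟩ := hd U₁ hU₁open hU₁dense r c hrc hc0 (lt_of_lt_of_le hrc hc1)
    refine ⟨t, htU, htc, ?_⟩
    have h1 : φ r < φ t := hφmono hrI (hU₁ htU) hrt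
    rw [hr, hφψ t htU] at h1
    have := le_max_left w 0
    linarith
  have hB2 : ∀ c : ℝ, 0 ≤ c → c < 1 → ∀ w : ℝ, φ c < w → ∃ t ∈ U₁, c < t ∧ ψ t < w := by
    intro c hc0 hc1 w hw
    by_cases hw1 : 1 < w
    · obtain ⟨t, htU, hct, _⟩ := hd U₁ hU₁open hU₁dense c 1 hc1 one_pos hc1
      exact ⟨t, htU, hct, lt_of_le_of_lt (hψI t htU).2 hw1⟩
    · push_neg at hw1
      set z := (φ c + w)/2 with hzdef
      have hz1 : φ c < z := by rw [hzdef]; linarith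
      have hz2 : z < w := by rw [hzdef]; linarith
      have hzI : z ∈ Set.Icc (0:ℝ) 1 := ⟨le_trans (hφ01 c).1 hz1.le, le_trans hz2.le hw1⟩
      obtain ⟨r, hrI, hr⟩ := hφsurj z hzI
      have hcr : c < r := by
        by_contra hcon
        push_neg at hcon
        have := hφM hrI ⟨hc0, hc1.le⟩ hcon
        rw [hr] at this
        linarith
      obtain ⟨t, htU, hct, htr⟩ := hd U₁ hU₁open hU₁dense c r hcr (lt_of_le_of_lt hc0 hcr) hc1
      refine ⟨t, htU, hct, ?_⟩
      have h1 : φ t < φ r := hφmono (hU₁ htU) hrI htr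
      rw [hr, hφψ t htU] at h1
      linarith
  have hfcurry : ∀ y ∈ Set.Icc (0:ℝ) 1, ContinuousOn (fun x' => f x' y) (Set.Icc 0 1) := by
    intro y hy
    exact hfc.comp ((continuous_id.prodMk continuous_const).continuousOn)
      (fun x hx => Set.mk_mem_prod hx hy)
  -- crux lemma (i)
  have hcrux1 : ∀ t ∈ U₁, ∀ x ∈ U₁, ∀ y ∈ U₁, t ≤ f x y → ψ t ≤ g (ψ x) (ψ y) := by
    intro t htU x hxU y hyU ht
    have htI := hU₁ htU
    have hxI := hU₁ hxU
    have hyI := hU₁ hyU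
    rcases eq_or_lt_of_le ht with heq | hlt
    · rw [heq]
      exact le_of_eq (hhom x hxU y hyU)
    · have ht0 : 0 < t := (hU₁I t htU).1
      obtain ⟨u, huU, hu1, hu2⟩ := hd U₁ hU₁open hU₁dense t (f x y) hlt
        (lt_trans ht0 hlt) (hU₁I t htU).2
      obtain ⟨δ, hδ, hball⟩ := Metric.isOpen_iff.mp (hU₁open.inter isOpen_Ioo) u ⟨huU, hu1, hu2⟩
      rw [Real.ball_eq_Ioo] at hball
      have hcont := hfcurry y hyI
      have h0y : f 0 y = 0 := hf0 y hyI
      have hivt := intermediate_value_Icc hxI.1 (hcont.mono (Set.Icc_subset_Icc le_rfl hxI.2))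
      have humem : u ∈ Set.Icc (f 0 y) (f x y) := ⟨by rw [h0y]; linarith, hu2.le⟩
      obtain ⟨xs, hxsI, hxs⟩ := hivt humem
      have hxs' : f xs y = u := hxs
      have hxs0 : 0 < xs := by
        rcases lt_or_eq_of_le hxsI.1 with h | h
        · exact h
        · exfalso
          rw [← h, h0y] at hxs'
          linarith
      have hxsI1 : xs ∈ Set.Icc (0:ℝ) 1 := ⟨hxsI.1, le_trans hxsI.2 hxI.2⟩
      obtain ⟨δ', hδ', hcl⟩ := Metric.continuousWithinAt_iff.mp (hcont xs hxsI1) δ hδ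
      have hminpos : 0 < min δ' xs := lt_min hδ' hxs0
      obtain ⟨xm, hxmU, hxm1, hxm2⟩ := hd U₁ hU₁open hU₁dense (xs - min δ' xs) xs
        (by linarith) hxs0 (by linarith [hxsI1.2])
      have hxmI := hU₁ hxmU
      have hdist : dist xm xs < δ' := by
        rw [Real.dist_eq, abs_lt]
        constructor
        · linarith [min_le_left δ' xs]
        · linarith
      have hdmem := hcl hxmI hdist
      rw [hxs', Real.dist_eq] at hdmem
      have hdball : f xm y ∈ Set.Ioo (u - δ) (u + δ) := by
        rw [abs_lt] at hdmem
        exact ⟨by linarith [hdmem.1], by linarith [hdmem.2]⟩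
      obtain ⟨hdU, hdt, hdc⟩ := hball hdball
      have h1 : ψ t < ψ (f xm y) := hmono htU hdU hdt
      have h2 : ψ (f xm y) = g (ψ xm) (ψ y) := hhom xm hxmU y hyU
      have h3 : g (ψ xm) (ψ y) ≤ g (ψ x) (ψ y) := by
        apply hgmono _ _ _ _ (hψI xm hxmU) (hψI x hxU) (hψI y hyU) (hψI y hyU) _ le_rfl
        exact hmonoM hxmU hxU (le_trans hxm2.le hxsI.2)
      linarith
  -- crux lemma (ii)
  have hcrux2 : ∀ t ∈ U₁, ∀ x ∈ U₁, ∀ y ∈ U₁, f x y ≤ t → g (ψ x) (ψ y) ≤ ψ t := by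
    intro t htU x hxU y hyU ht
    have htI := hU₁ htU
    have hxI := hU₁ hxU
    have hyI := hU₁ hyU
    rcases eq_or_lt_of_le ht with heq | hlt
    · rw [← heq]
      exact le_of_eq (hhom x hxU y hyU).symm
    · by_cases hyt : y ≤ t
      · have h1 : g (ψ x) (ψ y) ≤ g 1 (ψ y) :=
          hgmono _ _ _ _ (hψI x hxU) hone (hψI y hyU) (hψI y hyU) (hψI x hxU).2 le_rfl
        rw [hg1 (ψ y) (hψI y hyU)] at h1
        exact le_trans h1 (hmonoM hyU htU hyt)
      · push_neg at hyt
        have hf1y : f 1 y = y := hf1 y hyI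
        obtain ⟨u, huU, hu1, hu2⟩ := hd U₁ hU₁open hU₁dense (f x y) t hlt
          (hU₁I t htU).1 (lt_trans hlt (hU₁I t htU).2)
        obtain ⟨δ, hδ, hball⟩ := Metric.isOpen_iff.mp (hU₁open.inter isOpen_Ioo) u ⟨huU, hu1, hu2⟩
        rw [Real.ball_eq_Ioo] at hball
        have hcont := hfcurry y hyI
        have hivt := intermediate_value_Icc hxI.2 (hcont.mono (Set.Icc_subset_Icc hxI.1 le_rfl))
        have humem : u ∈ Set.Icc (f x y) (f 1 y) := ⟨hu1.le, by rw [hf1y]; linarith⟩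
        obtain ⟨xs, hxsI, hxs⟩ := hivt humem
        have hxs' : f xs y = u := hxs
        have hxs1 : xs < 1 := by
          rcases lt_or_eq_of_le hxsI.2 with h | h
          · exact h
          · exfalso
            rw [h, hf1y] at hxs'
            linarith
        have hxsI1 : xs ∈ Set.Icc (0:ℝ) 1 := ⟨le_trans hxI.1 hxsI.1, hxsI.2⟩
        obtain ⟨δ', hδ', hcl⟩ := Metric.continuousWithinAt_iff.mp (hcont xs hxsI1) δ hδ
        have hminpos : 0 < min δ' (1 - xs) := lt_min hδ' (by linarith)
        obtain ⟨xp, hxpU, hxp1, hxp2⟩ := hd U₁ hU₁open hU₁dense xs (xs + min δ' (1 - xs))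
          (by linarith) (by linarith [hxsI1.1]) hxs1
        have hxpI := hU₁ hxpU
        have hdist : dist xp xs < δ' := by
          rw [Real.dist_eq, abs_lt]
          constructor
          · linarith
          · linarith [min_le_left δ' (1 - xs)]
        have hdmem := hcl hxpI hdist
        rw [hxs', Real.dist_eq] at hdmem
        have hdball : f xp y ∈ Set.Ioo (u - δ) (u + δ) := by
          rw [abs_lt] at hdmem
          exact ⟨by linarith [hdmem.1], by linarith [hdmem.2]⟩
        obtain ⟨hdU, hdc, hdt⟩ := hball hdball
        have h1 : ψ (f xp y) < ψ t := hmono hdU htU hdt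
        have h2 : ψ (f xp y) = g (ψ xp) (ψ y) := hhom xp hxpU y hyU
        have h3 : g (ψ x) (ψ y) ≤ g (ψ xp) (ψ y) :=
          hgmono _ _ _ _ (hψI x hxU) (hψI xp hxpU) (hψI y hyU) (hψI y hyU)
            (hmonoM hxU hxpU (le_trans hxsI.1 hxp1.le)) le_rfl
        linarith
  -- the homomorphism property
  have hhomφ : ∀ X ∈ Set.Icc (0:ℝ) 1, ∀ Y ∈ Set.Icc (0:ℝ) 1, φ (f X Y) = g (φ X) (φ Y) := by
    intro X hX Y hY
    have hcI : f X Y ∈ Set.Icc (0:ℝ) 1 := hfrange X hX Y hY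
    have hgXY : g (φ X) (φ Y) ∈ Set.Icc (0:ℝ) 1 := hgrange _ (hφ01 X) _ (hφ01 Y)
    have hXc : f X Y ≤ X := by
      have := hfmono X X Y 1 hX hX hY hone le_rfl hY.2
      rwa [hfid X hX] at this
    have hYc : f X Y ≤ Y := by
      have := hfmono X 1 Y Y hX hone hY hY hX.2 le_rfl
      rwa [hf1 Y hY] at this
    apply le_antisymm
    · -- φ (f X Y) ≤ g (φ X) (φ Y)
      by_contra hcon
      push_neg at hcon
      rcases eq_or_lt_of_le hcI.1 with hc0 | hc0
      · rw [← hc0, hφ0] at hcon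
        exact absurd hcon (not_lt.mpr hgXY.1)
      · have hX0 : 0 < X := lt_of_lt_of_le hc0 hXc
        have hY0 : 0 < Y := lt_of_lt_of_le hc0 hYc
        obtain ⟨t, htU, htc, hgt⟩ := hB1 (f X Y) hc0 hcI.2 _ hcon
        have hXYmem : (X, Y) ∈ Set.Icc (0:ℝ) 1 ×ˢ Set.Icc (0:ℝ) 1 := Set.mk_mem_prod hX hY
        have hε : (0:ℝ) < f X Y - t := by linarith
        obtain ⟨δ, hδ, hcl⟩ := Metric.continuousWithinAt_iff.mp (hfc (X, Y) hXYmem) _ hε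
        have hmin1 : 0 < min δ X := lt_min hδ hX0
        have hmin2 : 0 < min δ Y := lt_min hδ hY0
        obtain ⟨x', hx'U, hx'1, hx'2⟩ := hd U₁ hU₁open hU₁dense (X - min δ X) X
          (by linarith) hX0 (by linarith [hX.2])
        obtain ⟨y', hy'U, hy'1, hy'2⟩ := hd U₁ hU₁open hU₁dense (Y - min δ Y) Y
          (by linarith) hY0 (by linarith [hY.2])
        have hx'I := hU₁ hx'U
        have hy'I := hU₁ hy'U
        have hdist : dist ((x', y') : ℝ × ℝ) ((X, Y) : ℝ × ℝ) < δ := by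
          rw [Prod.dist_eq]
          apply max_lt
          · rw [Real.dist_eq, abs_lt]
            constructor
            · linarith [min_le_left δ X]
            · linarith
          · rw [Real.dist_eq, abs_lt]
            constructor
            · linarith [min_le_left δ Y]
            · linarith
        have hmem : ((x', y') : ℝ × ℝ) ∈ Set.Icc (0:ℝ) 1 ×ˢ Set.Icc (0:ℝ) 1 :=
          Set.mk_mem_prod hx'I hy'I
        have hfd := hcl hmem hdist
        simp only [Real.dist_eq, abs_lt] at hfd
        have htle : t ≤ f x' y' := by linarith [hfd.1]
        have h1 : ψ t ≤ g (ψ x') (ψ y') := hcrux1 t htU x' hx'U y' hy'U htle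
        have h2 : g (ψ x') (ψ y') ≤ g (φ X) (φ Y) := by
          apply hgmono _ _ _ _ (hψI x' hx'U) (hφ01 X) (hψI y' hy'U) (hφ01 Y)
          · rw [← hφψ x' hx'U]
            exact hφM hx'I hX hx'2.le
          · rw [← hφψ y' hy'U]
            exact hφM hy'I hY hy'2.le
        linarith
    · -- g (φ X) (φ Y) ≤ φ (f X Y)
      rcases eq_or_lt_of_le hX.1 with hX0 | hX0
      · rw [← hX0, hφ0, hg0 (φ Y) (hφ01 Y)]
        exact (hφ01 (f 0 Y)).1
      rcases eq_or_lt_of_le hY.1 with hY0 | hY0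
      · rw [← hY0, hφ0, hgcomm (φ X) (hφ01 X) 0 hzero, hg0 (φ X) (hφ01 X)]
        exact (hφ01 (f X 0)).1
      rcases eq_or_lt_of_le hcI.2 with hc1 | hc1
      · have hX1 : X = 1 := le_antisymm hX.2 (by rw [← hc1]; exact hXc)
        have hY1 : Y = 1 := le_antisymm hY.2 (by rw [← hc1]; exact hYc)
        rw [hc1, hX1, hY1, hφ1, hg1 1 hone]
      · by_contra hcon
        push_neg at hcon
        obtain ⟨t, htU, hct, hlt'⟩ := hB2 (f X Y) hcI.1 hc1 _ hcon
        have hε : (0:ℝ) < g (φ X) (φ Y) - ψ t := by linarith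
        have hφmem : ((φ X, φ Y) : ℝ × ℝ) ∈ Set.Icc (0:ℝ) 1 ×ˢ Set.Icc (0:ℝ) 1 :=
          Set.mk_mem_prod (hφ01 X) (hφ01 Y)
        obtain ⟨δ, hδ, hcl⟩ := Metric.continuousWithinAt_iff.mp (hgc (φ X, φ Y) hφmem) _ hε
        obtain ⟨x', hx'U, hx'1, hgt1⟩ := hB1 X hX0 hX.2 (φ X - δ) (by linarith)
        obtain ⟨y', hy'U, hy'1, hgt2⟩ := hB1 Y hY0 hY.2 (φ Y - δ) (by linarith)
        have hψx'le : ψ x' ≤ φ X := by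
          rw [← hφψ x' hx'U]
          exact hφM (hU₁ hx'U) hX hx'1.le
        have hψy'le : ψ y' ≤ φ Y := by
          rw [← hφψ y' hy'U]
          exact hφM (hU₁ hy'U) hY hy'1.le
        have hdist : dist ((ψ x', ψ y') : ℝ × ℝ) ((φ X, φ Y) : ℝ × ℝ) < δ := by
          rw [Prod.dist_eq]
          apply max_lt
          · rw [Real.dist_eq, abs_lt]
            constructor <;> linarith
          · rw [Real.dist_eq, abs_lt]
            constructor <;> linarith
        have hmem : ((ψ x', ψ y') : ℝ × ℝ) ∈ Set.Icc (0:ℝ) 1 ×ˢ Set.Icc (0:ℝ) 1 :=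
          Set.mk_mem_prod (hψI x' hx'U) (hψI y' hy'U)
        have hgd := hcl hmem hdist
        simp only [Real.dist_eq, abs_lt] at hgd
        have hfle : f x' y' ≤ t := by
          have := hfmono x' X y' Y (hU₁ hx'U) hX (hU₁ hy'U) hY hx'1.le hy'1.le
          linarith
        have h1 : g (ψ x') (ψ y') ≤ ψ t := hcrux2 t htU x' hx'U y' hy'U hfle
        linarith [hgd.1]
  refine ⟨hφmono, ⟨fun x hx => hφ01 x, hφmono.injOn, ?_⟩, hφψ, hhomφ⟩
  intro z hz
  obtain ⟨x, hxI, hx⟩ := hφsurj z hz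
  exact ⟨x, hxI, hx⟩
end
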